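/- Let r, r̂_V, μ̂ ∈ ℝ, σ > 0, s > 0, 𝒯 > 0, and set ν₁ := (μ̂ − r + σ²/2)/σ, ν₂ := ν₁ − σ. Assume r̂_V ≠ μ̂, r̂_V ≠ r, and c := 2(r̂_V − μ̂) + ν₁² > 0 (equivalently c = 2(r̂_V − r) + ν₂²). Then ∫_0^𝒯 e^{−r̂_V w} BS_P(s, s e^{r w}, w) dw = s ( Υ₀(𝒯, r̂_V − r, −ν₂) − Υ₀(𝒯, r̂_V − μ̂, −ν₁) ), where BS_P is the Black–Scholes put function with drift m = μ̂ and volatility σ. (This identity evaluates the put-recovery integral in the forward valuation at the at-the-money risk-free strike.) -/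

import Mathlib

open MeasureTheory intervalIntegral Real ProbabilityTheory Filter Asymptotics

/-- The standard Gaussian measure on ℝ. -/
noncomputable def gaussMeasure : Measure ℝ := gaussianReal 0 1

/-- The standard normal CDF. -/
noncomputable def Phi (x : ℝ) : ℝ :=
  ∫ u in Set.Iic x, Real.exp (-u ^ 2 / 2) / Real.sqrt (2 * Real.pi)

/-- The standard normal density. -/
noncomputable def gaussPdf (x : ℝ) : ℝ := Real.exp (-x ^ 2 / 2) / Real.sqrt (2 * Real.pi)

/-- Black–Scholes `d₁` with volatility `σ` and drift `m`. -/
noncomputable def d1 (σ m s k t : ℝ) : ℝ :=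
  (Real.log (s / k) + (m + σ ^ 2 / 2) * t) / (σ * Real.sqrt t)

/-- Black–Scholes `d₂` with volatility `σ` and drift `m`. -/
noncomputable def d2 (σ m s k t : ℝ) : ℝ := d1 σ m s k t - σ * Real.sqrt t

/-- Black–Scholes call price (undiscounted) with volatility `σ` and drift `m`. -/
noncomputable def BSC (σ m s k t : ℝ) : ℝ :=
  s * Real.exp (m * t) * Phi (d1 σ m s k t) - k * Phi (d2 σ m s k t)

/-- Black–Scholes put price (undiscounted) with volatility `σ` and drift `m`. -/
noncomputable def BSP (σ m s k t : ℝ) : ℝ :=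
  k * Phi (-d2 σ m s k t) - s * Real.exp (m * t) * Phi (-d1 σ m s k t)

/-- The function `Υ₀` from the ATM forward valuation formula. -/
noncomputable def Ups0 (t x y : ℝ) : ℝ :=
  y / (x * Real.sqrt (2 * x + y ^ 2)) * (Phi (Real.sqrt ((2 * x + y ^ 2) * t)) - 1 / 2)
    - 1 / x * (Real.exp (-x * t) * Phi (y * Real.sqrt t) - 1 / 2)

/-- The second-order approximation `Υ̃` of the generalized `Υ` function. -/
noncomputable def UpsTilde (t x y z : ℝ) : ℝ :=
  Ups0 t x y
    + 2 / Real.sqrt (2 * x + y ^ 2) * (Phi (Real.sqrt ((2 * x + y ^ 2) * t)) - 1 / 2)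
      * (z - y / 2 * z ^ 2)

/-- Covariance of two real random variables. -/
noncomputable def cov {Ω : Type*} [MeasurableSpace Ω] (P : Measure Ω) (X Y : Ω → ℝ) : ℝ :=
  (∫ ω, X ω * Y ω ∂P) - (∫ ω, X ω ∂P) * (∫ ω, Y ω ∂P)

/-- Variance of a real random variable. -/
noncomputable def var {Ω : Type*} [MeasurableSpace Ω] (P : Measure Ω) (X : Ω → ℝ) : ℝ :=
  cov P X X

/-- Correlation of two real random variables. -/
noncomputable def corr {Ω : Type*} [MeasurableSpace Ω] (P : Measure Ω) (X Y : Ω → ℝ) : ℝ :=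
  cov P X Y / Real.sqrt (var P X * var P Y)


section Aux

open Set

lemma continuous_gaussPdf : Continuous gaussPdf := by
  unfold gaussPdf; fun_prop

lemma integrable_gaussPdf : Integrable gaussPdf := by
  have h : Integrable (fun u : ℝ => Real.exp (-(1/2) * u ^ 2)) :=
    integrable_exp_neg_mul_sq (by norm_num)
  have := h.div_const (Real.sqrt (2 * Real.pi))
  convert this using 2 with u
  unfold gaussPdf; ring_nf

lemma Phi_eq (x : ℝ) : Phi x = ∫ u in Set.Iic x, gaussPdf u := rfl

lemma hasDerivAt_Phi (x : ℝ) : HasDerivAt Phi (gaussPdf x) x := by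
  have h : ∀ y, Phi y = Phi 0 + ∫ u in (0:ℝ)..y, gaussPdf u := by
    intro y
    rw [← intervalIntegral.integral_Iic_sub_Iic integrable_gaussPdf.integrableOn
      integrable_gaussPdf.integrableOn, Phi_eq, Phi_eq]
    ring
  have hd : HasDerivAt (fun y => Phi 0 + ∫ u in (0:ℝ)..y, gaussPdf u) (gaussPdf x) x := by
    apply HasDerivAt.const_add
    exact intervalIntegral.integral_hasDerivAt_right
      (continuous_gaussPdf.intervalIntegrable _ _)
      (continuous_gaussPdf.stronglyMeasurableAtFilter _ _)
      continuous_gaussPdf.continuousAt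
  exact hd.congr_of_eventuallyEq (Filter.Eventually.of_forall fun y => h y)

lemma continuous_Phi : Continuous Phi :=
  continuous_iff_continuousAt.2 fun x => (hasDerivAt_Phi x).continuousAt

lemma Phi_zero : Phi 0 = 1 / 2 := by
  have htot : ∫ u, gaussPdf u = 1 := by
    unfold gaussPdf
    rw [MeasureTheory.integral_div]
    have h : ∫ u : ℝ, Real.exp (-(1/2) * u ^ 2) = Real.sqrt (Real.pi / (1/2)) :=
      integral_gaussian (1/2)
    have h2 : ∫ u : ℝ, Real.exp (-u ^ 2 / 2) = Real.sqrt (2 * Real.pi) := by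
      rw [show (Real.pi / (1/2)) = 2 * Real.pi by ring] at h
      rw [← h]; congr 1 with u; ring_nf
    rw [h2, div_self (by positivity)]
  have hsym : ∫ u in Set.Iic (0:ℝ), gaussPdf u = ∫ u in Set.Ioi (0:ℝ), gaussPdf u := by
    rw [← show -(0:ℝ) = 0 by ring, ← integral_comp_neg_Iic]
    simp [gaussPdf]
  have hadd := integral_Iic_add_Ioi (b := (0:ℝ))
    integrable_gaussPdf.integrableOn integrable_gaussPdf.integrableOn
  rw [htot, ← hsym] at hadd
  rw [Phi_eq]; linarith

lemma gaussPdf_key (x y t : ℝ) (hc : 0 ≤ 2 * x + y ^ 2) (ht : 0 ≤ t) :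
    gaussPdf (Real.sqrt ((2 * x + y ^ 2) * t)) = Real.exp (-x * t) * gaussPdf (y * Real.sqrt t) := by
  unfold gaussPdf
  rw [Real.sq_sqrt (by positivity), mul_pow, Real.sq_sqrt ht, ← mul_div_assoc, ← Real.exp_add]
  congr 1; ring

lemma hasDerivAt_Ups0 (x y t : ℝ) (hx : x ≠ 0) (hc : 0 < 2 * x + y ^ 2) (ht : 0 < t) :
    HasDerivAt (fun t => Ups0 t x y) (Real.exp (-x * t) * Phi (y * Real.sqrt t)) t := by
  set c := 2 * x + y ^ 2 with hcdef
  have hct : 0 < c * t := mul_pos hc ht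
  have h1 : HasDerivAt (fun t : ℝ => Phi (Real.sqrt (c * t)))
      (gaussPdf (Real.sqrt (c * t)) * (1 / (2 * Real.sqrt (c * t)) * c)) t := by
    have hlin : HasDerivAt (fun t : ℝ => c * t) c t := by
      simpa using (hasDerivAt_id t).const_mul c
    exact (hasDerivAt_Phi _).comp t ((Real.hasDerivAt_sqrt hct.ne').comp t hlin)
  have h2 : HasDerivAt (fun t : ℝ => Real.exp (-x * t)) (-x * Real.exp (-x * t)) t := by
    have hlin : HasDerivAt (fun t : ℝ => -x * t) (-x) t := by
      simpa using (hasDerivAt_id t).const_mul (-x)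
    simpa [mul_comm] using hlin.exp
  have h3 : HasDerivAt (fun t : ℝ => Phi (y * Real.sqrt t))
      (gaussPdf (y * Real.sqrt t) * (y * (1 / (2 * Real.sqrt t)))) t := by
    have hs : HasDerivAt (fun t : ℝ => y * Real.sqrt t) (y * (1 / (2 * Real.sqrt t))) t :=
      (Real.hasDerivAt_sqrt ht.ne').const_mul y
    exact (hasDerivAt_Phi _).comp t hs
  have hD : HasDerivAt (fun t => Ups0 t x y)
      (y / (x * Real.sqrt c) * (gaussPdf (Real.sqrt (c * t)) * (1 / (2 * Real.sqrt (c * t)) * c))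
        - 1 / x * (-x * Real.exp (-x * t) * Phi (y * Real.sqrt t)
          + Real.exp (-x * t) * (gaussPdf (y * Real.sqrt t) * (y * (1 / (2 * Real.sqrt t)))))) t := by
    unfold Ups0
    exact ((h1.sub_const _).const_mul _).sub (((h2.mul h3).sub_const _).const_mul _)
  convert hD using 1
  rw [gaussPdf_key x y t hc.le ht.le, Real.sqrt_mul hc.le]
  have hsc : Real.sqrt c * Real.sqrt c = c := Real.mul_self_sqrt hc.le
  have hscp : 0 < Real.sqrt c := Real.sqrt_pos.2 hc
  have hstp : 0 < Real.sqrt t := Real.sqrt_pos.2 ht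
  set E := Real.exp (-x * t)
  set g := gaussPdf (y * Real.sqrt t)
  set P := Phi (y * Real.sqrt t)
  set sc := Real.sqrt c
  set st := Real.sqrt t
  rw [← hsc]
  field_simp
  ring_nf

lemma integral_exp_Phi (x y T : ℝ) (hx : x ≠ 0) (hc : 0 < 2 * x + y ^ 2) (hT : 0 < T) :
    ∫ w in (0:ℝ)..T, Real.exp (-x * w) * Phi (y * Real.sqrt w) = Ups0 T x y := by
  have hcont2 : Continuous fun w : ℝ => Real.exp (-x * w) * Phi (y * Real.sqrt w) := by
    exact (Real.continuous_exp.comp (continuous_const.mul continuous_id)).mul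
      (continuous_Phi.comp (continuous_const.mul Real.continuous_sqrt))
  have hcont : ContinuousOn (fun t => Ups0 t x y) (Set.Icc 0 T) := by
    apply Continuous.continuousOn
    unfold Ups0
    exact ((continuous_const.mul ((continuous_Phi.comp
        (Real.continuous_sqrt.comp (continuous_const.mul continuous_id))).sub
        continuous_const)).sub (continuous_const.mul ((hcont2).sub continuous_const)))
  rw [intervalIntegral.integral_eq_sub_of_hasDeriv_right_of_le hT.le hcont
    (fun t htt => (hasDerivAt_Ups0 x y t hx hc htt.1).hasDerivWithinAt)
    (hcont2.intervalIntegrable _ _)]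
  have h0 : Ups0 0 x y = 0 := by
    simp [Ups0, Phi_zero]
  rw [h0, sub_zero]

end Aux

/-- The put-recovery integral in the forward valuation at the at-the-money
risk-free strike, in terms of `Υ₀`. -/
theorem put_recovery_integral_ATMRF
    (r rV μ σ s 𝒯 : ℝ) (hσ : 0 < σ) (hs : 0 < s) (hT : 0 < 𝒯)
    (ν1 ν2 : ℝ) (hν1 : ν1 = (μ - r + σ ^ 2 / 2) / σ) (hν2 : ν2 = ν1 - σ)
    (h1 : rV ≠ μ) (h2 : rV ≠ r) (hc : 0 < 2 * (rV - μ) + ν1 ^ 2) :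
    ∫ w in (0 : ℝ)..𝒯, Real.exp (-rV * w) * BSP σ μ s (s * Real.exp (r * w)) w
      = s * (Ups0 𝒯 (rV - r) (-ν2) - Ups0 𝒯 (rV - μ) (-ν1)) := by
  have hx1 : rV - μ ≠ 0 := sub_ne_zero.2 h1
  have hx2 : rV - r ≠ 0 := sub_ne_zero.2 h2
  have hc1 : 0 < 2 * (rV - μ) + (-ν1) ^ 2 := by rwa [neg_sq]
  have hc2 : 0 < 2 * (rV - r) + (-ν2) ^ 2 := by
    rw [neg_sq]
    have : 2 * (rV - r) + ν2 ^ 2 = 2 * (rV - μ) + ν1 ^ 2 := by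
      subst hν2 hν1; field_simp; ring
    linarith [this, hc]
  have hEq : Set.EqOn
      (fun w => Real.exp (-rV * w) * BSP σ μ s (s * Real.exp (r * w)) w)
      (fun w => s * (Real.exp (-(rV - r) * w) * Phi (-ν2 * Real.sqrt w)
        - Real.exp (-(rV - μ) * w) * Phi (-ν1 * Real.sqrt w)))
      (Set.uIcc 0 𝒯) := by
    intro w hw
    rw [Set.uIcc_of_le hT.le] at hw
    rcases eq_or_lt_of_le hw.1 with h0 | h0
    · simp [← h0, BSP, d1, d2, hs.ne']
    · have hsw : Real.sqrt w * Real.sqrt w = w := Real.mul_self_sqrt h0.le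
      have hswp : 0 < Real.sqrt w := Real.sqrt_pos.2 h0
      have hd1 : d1 σ μ s (s * Real.exp (r * w)) w = ν1 * Real.sqrt w := by
        unfold d1
        rw [show s / (s * Real.exp (r * w)) = Real.exp (-(r * w)) by
          rw [Real.exp_neg]; field_simp, Real.log_exp, hν1]
        field_simp
        linear_combination (2 * r - 2 * μ - σ ^ 2) * hsw
      have hd2 : d2 σ μ s (s * Real.exp (r * w)) w = ν2 * Real.sqrt w := by
        rw [d2, hd1, hν2]; ring
      show Real.exp (-rV * w) * BSP σ μ s (s * Real.exp (r * w)) w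
        = s * (Real.exp (-(rV - r) * w) * Phi (-ν2 * Real.sqrt w)
          - Real.exp (-(rV - μ) * w) * Phi (-ν1 * Real.sqrt w))
      rw [BSP, hd1, hd2]
      rw [show -(ν2 * Real.sqrt w) = -ν2 * Real.sqrt w by ring,
        show -(ν1 * Real.sqrt w) = -ν1 * Real.sqrt w by ring]
      rw [show -(rV - r) * w = -rV * w + r * w by ring,
        show -(rV - μ) * w = -rV * w + μ * w by ring, Real.exp_add, Real.exp_add]
      ring
  rw [intervalIntegral.integral_congr hEq]
  have hi1 : IntervalIntegrable
      (fun w => Real.exp (-(rV - r) * w) * Phi (-ν2 * Real.sqrt w)) volume 0 𝒯 :=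
    (((Real.continuous_exp.comp (continuous_const.mul continuous_id)).mul
      (continuous_Phi.comp (continuous_const.mul Real.continuous_sqrt)))).intervalIntegrable _ _
  have hi2 : IntervalIntegrable
      (fun w => Real.exp (-(rV - μ) * w) * Phi (-ν1 * Real.sqrt w)) volume 0 𝒯 :=
    (((Real.continuous_exp.comp (continuous_const.mul continuous_id)).mul
      (continuous_Phi.comp (continuous_const.mul Real.continuous_sqrt)))).intervalIntegrable _ _
  rw [intervalIntegral.integral_const_mul, intervalIntegral.integral_sub hi1 hi2,
    integral_exp_Phi _ _ _ hx2 hc2 hT, integral_exp_Phi _ _ _ hx1 hc1 hT]
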